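/- arXiv:2210.12729 — 7 statements merged into one kernel-verified Lean document; each statement's English description precedes it below -/
import Mathlib

section
/- Let K be a field and let A and B be valuation subrings of K each of which is a discrete valuation ring (IsDiscreteValuationRing). If A and B are dependent, i.e., the subring of K generated by A ∪ B is a proper subring of K, then A = B. -/
/-- Any valuation subring strictly containing a DVR valuation subring is the whole field. -/
theorem aux_dvr_overring (K : Type*) [Field K] (A S : ValuationSubring K)
    [IsDiscreteValuationRing A] (hle : A ≤ S) : S = A ∨ S = ⊤ := by
  have hP : (ValuationSubring.idealOfLE A S hle).IsPrime := inferInstance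
  rcases eq_or_ne (ValuationSubring.idealOfLE A S hle) ⊥ with hbot | hne
  · -- prime is ⊥ : S = ⊤
    right
    ext x
    simp only [ValuationSubring.mem_top, iff_true]
    rcases A.mem_or_inv_mem x with hx | hx
    · exact hle hx
    · rcases eq_or_ne x 0 with rfl | hx0
      · exact S.zero_mem
      have hxi0 : x⁻¹ ≠ 0 := inv_ne_zero hx0
      have hxS : x⁻¹ ∈ S := hle hx
      -- x⁻¹ is not in the maximal ideal of S
      have : (⟨x⁻¹, hxS⟩ : S) ∉ IsLocalRing.maximalIdeal S := by
        intro hmem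
        have : (⟨x⁻¹, hx⟩ : A) ∈ ValuationSubring.idealOfLE A S hle := by
          exact hmem
        rw [hbot] at this
        exact hxi0 (by simpa using congrArg (Subtype.val) (Ideal.mem_bot.mp this))
      have hunit : IsUnit (⟨x⁻¹, hxS⟩ : S) := by
        by_contra hnu
        exact this (IsLocalRing.mem_maximalIdeal _ |>.mpr hnu)
      obtain ⟨u, hu⟩ := hunit
      have hmul : (x⁻¹ : K) * (((u⁻¹ : Sˣ) : S) : K) = 1 := by
        have h1 : ((u : S) : K) * (((u⁻¹ : Sˣ) : S) : K) = 1 := by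
          rw [← Subring.coe_one S.toSubring]; norm_cast; simp
        rwa [hu] at h1
      have : (((u⁻¹ : Sˣ) : S) : K) = x := ((inv_mul_eq_one₀ hx0).mp hmul).symm
      exact this ▸ ((u⁻¹ : Sˣ) : S).2
  · -- prime is the maximal ideal : S = A
    left
    have hmax : ValuationSubring.idealOfLE A S hle = IsLocalRing.maximalIdeal A :=
      IsLocalRing.eq_maximalIdeal (IsPrime.to_maximal_ideal hne)
    apply le_antisymm _ hle
    intro x hxS
    by_contra hxA
    have hxinv : x⁻¹ ∈ A := (A.mem_or_inv_mem x).resolve_left hxA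
    have hx0 : x ≠ 0 := fun h => hxA (h ▸ A.zero_mem)
    -- x⁻¹ is a nonunit in A
    have hnu : (⟨x⁻¹, hxinv⟩ : A) ∈ IsLocalRing.maximalIdeal A := by
      rw [IsLocalRing.mem_maximalIdeal, mem_nonunits_iff]
      intro hu
      obtain ⟨u, hu⟩ := hu
      have h1 : (((u : A) : K)) * (((u⁻¹ : Aˣ) : A) : K) = 1 := by
        rw [← Subring.coe_one A.toSubring]; norm_cast; simp
      rw [hu] at h1
      have h2 : (((u⁻¹ : Aˣ) : A) : K) = x := ((inv_mul_eq_one₀ hx0).mp h1).symm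
      exact hxA (h2 ▸ ((u⁻¹ : Aˣ) : A).2)
    rw [← hmax] at hnu
    have : (⟨x⁻¹, hle hxinv⟩ : S) ∈ IsLocalRing.maximalIdeal S := by
      exact hnu
    rw [IsLocalRing.mem_maximalIdeal, mem_nonunits_iff] at this
    apply this
    refine IsUnit.of_mul_eq_one ⟨x, hxS⟩ ?_
    ext
    simp [inv_mul_cancel₀ hx0]

/-- Lemma 3.5: two dependent discrete valuations on a field coincide.  Here `A` and `B` are
valuation subrings of `K` which are discrete valuation rings, and dependence means that the
subring of `K` generated by `A ∪ B` is a proper subring of `K`. -/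
theorem dependent_discrete_valuations_eq (K : Type*) [Field K]
    (A B : ValuationSubring K)
    [IsDiscreteValuationRing A] [IsDiscreteValuationRing B]
    (h : Subring.closure ((A : Set K) ∪ (B : Set K)) ≠ ⊤) :
    A = B := by
  set C := Subring.closure ((A : Set K) ∪ (B : Set K)) with hC
  have hAC : (A : Set K) ⊆ C := le_trans Set.subset_union_left Subring.subset_closure
  have hBC : (B : Set K) ⊆ C := le_trans Set.subset_union_right Subring.subset_closure
  let C' : ValuationSubring K :=
    { C with mem_or_inv_mem' := fun x =>
        ((A.mem_or_inv_mem x).imp (fun hx => hAC hx) (fun hx => hAC hx)) }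
  have hC'top : C' ≠ ⊤ := fun ht => h (by
    have : C'.toSubring = C := rfl
    rw [← this, ht]; rfl)
  have hA : C' = A := ((aux_dvr_overring K A C' hAC).resolve_right hC'top)
  have hB : C' = B := ((aux_dvr_overring K B C' hBC).resolve_right hC'top)
  rw [← hA, hB]
end

section
/- Let Γ be a nontrivial linearly ordered additive abelian group and k a field. Then for every countable subfield F of the Hahn series field HahnSeries Γ k, the set of elements of HahnSeries Γ k that are transcendental over F has cardinality at least 2^ℵ₀ (the continuum); in particular, there are uncountably many elements of HahnSeries Γ k transcendental over F. -/
open Cardinal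

set_option synthInstance.maxHeartbeats 1000000
set_option maxHeartbeats 2000000

/-- Property (3) of Assumption (⊗) (Lemma 4.1): if `Γ` is a nontrivial linearly ordered
abelian group and `k` a field, then for every countable subfield `F` of the Hahn series
field `HahnSeries Γ k` there are at least continuum many elements of `HahnSeries Γ k`
transcendental over `F`. -/
theorem hahnSeries_transcendental_continuum (Γ : Type*) [AddCommGroup Γ]
    [LinearOrder Γ] [IsOrderedAddMonoid Γ]
    [Nontrivial Γ] (k : Type*) [Field k]
    (F : Subfield (HahnSeries Γ k)) (hF : Countable F) :
    Cardinal.continuum ≤ Cardinal.mk {x : HahnSeries Γ k // Transcendental F x} := by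
  classical
  -- Step 1: the Hahn series field has at least continuum many elements.
  obtain ⟨g, hg⟩ := exists_ne (0 : Γ)
  have hg' : 0 < |g| := abs_pos.mpr hg
  have hsm : StrictMono (fun n : ℕ => n • |g|) := strictMono_nat_of_lt_succ (fun n => by
    rw [succ_nsmul]; exact lt_add_of_pos_right _ hg')
  let e : ℕ ↪o Γ := OrderEmbedding.ofStrictMono _ hsm
  let f : Set ℕ → HahnSeries Γ k := fun s =>
    HahnSeries.embDomain e (HahnSeries.toPowerSeries.symm
      (PowerSeries.mk fun n => if n ∈ s then (1 : k) else 0))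
  have hfinj : Function.Injective f := by
    intro s t h
    ext n
    have h2 := congrArg (fun x => HahnSeries.coeff x (e n)) h
    simp only [f, HahnSeries.embDomain_coeff, HahnSeries.coeff_toPowerSeries_symm,
      PowerSeries.coeff_mk] at h2
    by_cases hs : n ∈ s <;> by_cases ht : n ∈ t <;> simp_all
  have hE : Cardinal.continuum ≤ #(HahnSeries Γ k) := by
    have hfinj' : Function.Injective (fun s : ULift.{_,0} (Set ℕ) => f s.down) :=
      fun a b h => ULift.ext _ _ (hfinj h)
    calc Cardinal.continuum = #(ULift.{_,0} (Set ℕ)) := by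
          rw [Cardinal.mk_uLift, Cardinal.mk_set, Cardinal.mk_nat, Cardinal.two_power_aleph0,
            Cardinal.lift_continuum]
      _ ≤ #(HahnSeries Γ k) := Cardinal.mk_le_of_injective hfinj'
  -- Step 2: the set of algebraic elements is countable.
  have hA : #(algebraicClosure F (HahnSeries Γ k)) ≤ Cardinal.aleph0 := by
    refine (Algebra.IsAlgebraic.cardinalMk_le_max F (algebraicClosure F (HahnSeries Γ k))).trans ?_
    simp [Cardinal.mk_le_aleph0]
  -- Step 3: conclude.
  by_contra hcon
  push_neg at hcon
  have hsum := Cardinal.mk_sum_compl {x : HahnSeries Γ k | IsAlgebraic F x}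
  have h1 : #({x : HahnSeries Γ k | IsAlgebraic F x}) ≤ Cardinal.aleph0 := by
    refine le_trans (le_of_eq (Cardinal.mk_congr (Equiv.subtypeEquivRight fun x => ?_))) hA
    exact (mem_algebraicClosure_iff).symm
  have h2 : #(↥({x : HahnSeries Γ k | IsAlgebraic F x}ᶜ)) < Cardinal.continuum := by
    refine lt_of_le_of_lt (le_of_eq (Cardinal.mk_congr (Equiv.subtypeEquivRight fun x => ?_))) hcon
    exact Iff.rfl
  have : #(HahnSeries Γ k) < Cardinal.continuum := by
    rw [← hsum]
    exact Cardinal.add_lt_of_lt Cardinal.aleph0_le_continuum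
      (lt_of_le_of_lt h1 Cardinal.aleph0_lt_continuum) h2
  exact absurd hE (not_le.mpr this)
end

section
/- Let Γ be a nontrivial linearly ordered additive abelian group and k a field. Then the cardinality of the Hahn series field HahnSeries Γ k is at least 2^ℵ₀ (the continuum). -/
/-- A cardinality estimate from Lemma 4.1: if `Γ` is a nontrivial linearly ordered abelian
group and `k` a field, the Hahn series field `HahnSeries Γ k` has cardinality at least the
continuum. -/
theorem hahnSeries_card_continuum (Γ : Type*) [AddCommGroup Γ] [LinearOrder Γ]
    [IsOrderedAddMonoid Γ]
    [Nontrivial Γ] (k : Type*) [Field k] :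
    Cardinal.continuum ≤ Cardinal.mk (HahnSeries Γ k) := by
  obtain ⟨a, ha⟩ := exists_ne (0 : Γ)
  set g : Γ := max a (-a) with hg
  have hgpos : 0 < g := by
    rcases lt_trichotomy a 0 with h | h | h
    · exact lt_max_of_lt_right (neg_pos.mpr h)
    · exact absurd h ha
    · exact lt_max_of_lt_left h
  have hmono : StrictMono (fun n : ℕ => n • g) := fun m n h => nsmul_lt_nsmul_left hgpos h
  have hpwo : ∀ S : Set ℕ, ((fun n : ℕ => n • g) '' S).IsPWO := fun S =>
    ((Set.IsWF.of_wellFoundedLT (Set.univ : Set ℕ)).isPWO.mono (Set.subset_univ S)).image_of_monotone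
      hmono.monotone
  set F : Set ℕ → HahnSeries Γ k := fun S =>
    ⟨Set.indicator ((fun n : ℕ => n • g) '' S) 1, by
      exact (hpwo S).mono (Set.support_indicator_subset)⟩ with hF
  have hmem : ∀ (S : Set ℕ) (n : ℕ), n • g ∈ (fun m : ℕ => m • g) '' S ↔ n ∈ S := by
    intro S n
    constructor
    · rintro ⟨m, hm, hmg⟩
      exact hmono.injective hmg ▸ hm
    · exact fun h => ⟨n, h, rfl⟩
  have key : ∀ (S : Set ℕ) (n : ℕ), n ∈ S ↔ (F S).coeff (n • g) = 1 := by
    intro S n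
    simp only [hF, Set.indicator_apply]
    by_cases h : n ∈ S
    · simp [(hmem S n).mpr h, h]
    · simp [hmem S n, h]
  have hinj : Function.Injective F := by
    intro S T hST
    ext n
    rw [key S n, key T n, hST]
  have h1 : Cardinal.lift.{max u_1 u_2} (Cardinal.mk (Set ℕ)) ≤
      Cardinal.lift.{0} (Cardinal.mk (HahnSeries Γ k)) :=
    Cardinal.lift_mk_le'.mpr ⟨⟨F, hinj⟩⟩
  simp only [Cardinal.lift_id', Cardinal.mk_set, Cardinal.mk_nat, Cardinal.lift_two_power,
    Cardinal.lift_aleph0] at h1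
  rwa [Cardinal.continuum]
end

section
/- Let Γ be a linearly ordered additive abelian group, k a field, and q a prime number with (q : k) ≠ 0. Let F₀ be the subfield of the Hahn series field HahnSeries Γ k generated by the constant series C c for c ∈ k together with the monomials single γ 1 for γ ∈ Γ. Then for every nonzero a ∈ HahnSeries Γ k there exist a nonzero b ∈ F₀ and an element c ∈ HahnSeries Γ k such that a = b · c^q. -/
/-! Auxiliary construction: a `q`-th root of `1 + X` in `k⟦X⟧`, built by explicit
coefficient recursion, together with a power-series evaluation ring hom into Hahn series. -/

open Finset

section Root

variable (k : Type*) [Field k] (q : ℕ)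

/-- Polynomial truncations of the `q`-th root of `1 + X`. -/
noncomputable def rootTrunc : ℕ → Polynomial k
  | 0 => 0
  | n + 1 =>
      rootTrunc n +
        Polynomial.C
          (if n = 0 then 1
           else ((if n = 1 then (1 : k) else 0) - ((rootTrunc n) ^ q).coeff n) / q) *
        Polynomial.X ^ n

variable {k q}

lemma rootTrunc_succ (n : ℕ) :
    rootTrunc k q (n + 1) = rootTrunc k q n +
      Polynomial.C
        (if n = 0 then 1
         else ((if n = 1 then (1 : k) else 0) - ((rootTrunc k q n) ^ q).coeff n) / q) *
      Polynomial.X ^ n := by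
  rw [rootTrunc]

lemma rootTrunc_coeff_eq_zero : ∀ n i, n ≤ i → (rootTrunc k q n).coeff i = 0
  | 0, i, _ => by simp [rootTrunc]
  | n + 1, i, h => by
      have hn : n ≤ i := le_trans (Nat.le_succ n) h
      have hne : ¬ i = n := by omega
      simp [rootTrunc, Polynomial.coeff_add, Polynomial.coeff_C_mul, Polynomial.coeff_X_pow,
        rootTrunc_coeff_eq_zero n i hn, hne]

lemma rootTrunc_coeff_zero : ∀ n, (rootTrunc k q (n + 1)).coeff 0 = 1
  | 0 => by simp [rootTrunc]
  | n + 1 => by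
      rw [rootTrunc_succ, Polynomial.coeff_add, Polynomial.coeff_C_mul, Polynomial.coeff_X_pow,
        rootTrunc_coeff_zero n]
      simp

lemma rootTrunc_coeff_stable :
    ∀ n i, i < n → (rootTrunc k q n).coeff i = (rootTrunc k q (i + 1)).coeff i
  | 0, i, h => absurd h (Nat.not_lt_zero i)
  | n + 1, i, h => by
      rcases Nat.lt_succ_iff_lt_or_eq.mp h with h' | rfl
      · have hne : ¬ i = n := by omega
        have ih := rootTrunc_coeff_stable n i h'
        simp [rootTrunc, Polynomial.coeff_add, Polynomial.coeff_C_mul, Polynomial.coeff_X_pow,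
          hne, ih]
      · rfl

variable (k q) in
/-- The `q`-th root of `1 + X` as a power series. -/
noncomputable def rootPS : PowerSeries k :=
  PowerSeries.mk fun i => (rootTrunc k q (i + 1)).coeff i

lemma coeff_rootPS {n i : ℕ} (h : i < n) :
    PowerSeries.coeff i (rootPS k q) = (rootTrunc k q n).coeff i := by
  rw [rootPS, PowerSeries.coeff_mk, rootTrunc_coeff_stable n i h]

lemma coeff_pow_congr {R : Type*} [CommSemiring R] {f f' : PowerSeries R} {n : ℕ}
    (h : ∀ i ≤ n, PowerSeries.coeff i f = PowerSeries.coeff i f') (m : ℕ) :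
    ∀ i ≤ n, PowerSeries.coeff i (f ^ m) = PowerSeries.coeff i (f' ^ m) := by
  induction m with
  | zero => intro i _; simp
  | succ m ih =>
    intro i hi
    rw [pow_succ, pow_succ, PowerSeries.coeff_mul, PowerSeries.coeff_mul]
    refine Finset.sum_congr rfl fun p hp => ?_
    rw [Finset.HasAntidiagonal.mem_antidiagonal] at hp
    rw [ih p.1 (by omega), h p.2 (by omega)]

lemma coeff_rootPS_pow (n : ℕ) :
    PowerSeries.coeff n ((rootPS k q) ^ q) = ((rootTrunc k q (n + 1)) ^ q).coeff n := by
  have h : ∀ i ≤ n, PowerSeries.coeff i (rootPS k q)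
      = PowerSeries.coeff i ((rootTrunc k q (n + 1) : Polynomial k) : PowerSeries k) := by
    intro i hi
    rw [Polynomial.coeff_coe, coeff_rootPS (by omega : i < n + 1)]
  rw [coeff_pow_congr h q n le_rfl, ← Polynomial.coe_pow, Polynomial.coeff_coe]

lemma rootPS_pow_eq (hq2 : 2 ≤ q) (hk : (q : k) ≠ 0) :
    (rootPS k q) ^ q = 1 + PowerSeries.X := by
  ext n
  rw [coeff_rootPS_pow, map_add, PowerSeries.coeff_one, PowerSeries.coeff_X]
  rcases n with _ | m
  · have h1 : rootTrunc k q 1 = Polynomial.C 1 := by simp [rootTrunc]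
    simp [h1]
  · -- n = m + 1
    obtain ⟨r, rfl⟩ : ∃ r, q = r + 2 := ⟨q - 2, by omega⟩
    set P : Polynomial k := rootTrunc k (r + 2) (m + 1) with hP
    set a : k := ((if m + 1 = 1 then (1 : k) else 0) - (P ^ (r + 2)).coeff (m + 1))
      / ((r + 2 : ℕ) : k) with ha
    have hstep : rootTrunc k (r + 2) (m + 1 + 1)
        = P + Polynomial.C a * Polynomial.X ^ (m + 1) := by
      rw [rootTrunc_succ, if_neg (show ¬ (m + 1 = 0) by omega)]
    have hcz : P.coeff 0 = 1 := rootTrunc_coeff_zero m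
    rw [hstep, add_pow, Finset.sum_range_succ, Finset.sum_range_succ]
    simp only [Polynomial.coeff_add, Polynomial.finset_sum_coeff]
    have hzero : ∀ j ∈ Finset.range (r + 1),
        (P ^ j * (Polynomial.C a * Polynomial.X ^ (m + 1)) ^ (r + 2 - j)
          * ((r + 2).choose j : Polynomial k)).coeff (m + 1) = 0 := by
      intro j hj
      rw [Finset.mem_range] at hj
      have he2 : 2 ≤ r + 2 - j := by omega
      rw [mul_pow, ← map_pow, ← pow_mul]
      have hrearr : P ^ j * (Polynomial.C (a ^ (r + 2 - j))
            * Polynomial.X ^ ((m + 1) * (r + 2 - j))) * ((r + 2).choose j : Polynomial k)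
          = (P ^ j * Polynomial.C (a ^ (r + 2 - j)) * ((r + 2).choose j : Polynomial k)) *
            Polynomial.X ^ ((m + 1) * (r + 2 - j)) := by ring
      rw [hrearr, Polynomial.coeff_mul_X_pow']
      have hlt : ¬ (m + 1) * (r + 2 - j) ≤ m + 1 := by
        have h2 : (m + 1) * 2 ≤ (m + 1) * (r + 2 - j) := Nat.mul_le_mul_left (m + 1) he2
        omega
      simp [hlt]
    rw [Finset.sum_eq_zero hzero, zero_add]
    have hsub1 : r + 2 - (r + 1) = 1 := by omega
    have hsub2 : r + 2 - (r + 2) = 0 := by omega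
    have hchoose1 : ((r + 2).choose (r + 1)) = r + 2 := by
      simp [Nat.choose_succ_self_right]
    rw [hsub1, hsub2, hchoose1, Nat.choose_self, pow_one, pow_zero, mul_one, Nat.cast_one,
      mul_one]
    have hrearr1 : P ^ (r + 1) * (Polynomial.C a * Polynomial.X ^ (m + 1))
          * ((r + 2 : ℕ) : Polynomial k)
        = (P ^ (r + 1) * Polynomial.C a * ((r + 2 : ℕ) : Polynomial k))
          * Polynomial.X ^ (m + 1) := by ring
    rw [hrearr1, Polynomial.coeff_mul_X_pow', if_pos le_rfl, Nat.sub_self]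
    have hP0 : (P ^ (r + 1)).coeff 0 = 1 := by
      rw [← Polynomial.constantCoeff_apply, map_pow, Polynomial.constantCoeff_apply, hcz,
        one_pow]
    have hc0 : (P ^ (r + 1) * Polynomial.C a * ((r + 2 : ℕ) : Polynomial k)).coeff 0
        = a * ((r + 2 : ℕ) : k) := by
      rw [Polynomial.mul_coeff_zero, Polynomial.mul_coeff_zero, hP0, one_mul,
        Polynomial.coeff_C_zero, ← Polynomial.C_eq_natCast, Polynomial.coeff_C_zero]
    rw [hc0, ha, div_mul_cancel₀ _ hk, if_neg (by omega : ¬ (m + 1 = 0)), zero_add]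
    ring

end Root

section Heval

variable {Γ : Type*} [AddCommGroup Γ] [LinearOrder Γ] [IsOrderedAddMonoid Γ] {k : Type*} [Field k]

open HahnSeries HahnSeries.SummableFamily

/-- The summable family `n ↦ (coeff n f) • u ^ n` for `u` of positive order. -/
noncomputable def psFam (u : HahnSeries Γ k) (hu : 0 < u.orderTop) (f : PowerSeries k) :
    SummableFamily Γ k ℕ where
  toFun n := (PowerSeries.coeff n f) • u ^ n
  isPWO_iUnion_support' := by
    refine (isPWO_iUnion_support_powers (zero_le_orderTop_iff.mp <| le_of_lt hu)).mono (Set.iUnion_mono fun n => fun g hg => ?_)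
    have h1 : ((PowerSeries.coeff n f) • u ^ n).coeff g ≠ 0 := hg
    refine (HahnSeries.mem_support _ _).mpr fun h0 => h1 ?_
    rw [HahnSeries.coeff_smul, h0, smul_zero]
  finite_co_support' g := by
    refine (pow_finite_co_support hu g).subset fun n hn => ?_
    have h1 : ((PowerSeries.coeff n f) • u ^ n).coeff g ≠ 0 := hn
    show (u ^ n).coeff g ≠ 0
    refine fun h0 => h1 ?_
    rw [HahnSeries.coeff_smul, h0, smul_zero]

@[simp] lemma psFam_apply (u : HahnSeries Γ k) (hu : 0 < u.orderTop) (f : PowerSeries k) (n : ℕ) :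
    psFam u hu f n = (PowerSeries.coeff n f) • u ^ n := rfl

lemma psFam_hsum_mul (u : HahnSeries Γ k) (hu : 0 < u.orderTop) (f g : PowerSeries k) :
    (psFam u hu (f * g)).hsum = (psFam u hu f).hsum * (psFam u hu g).hsum := by
  classical
  have h := hsum_mul (psFam u hu f) (psFam u hu g)
  rw [← h]
  ext γ
  rw [coeff_hsum, coeff_hsum]
  set S : Finset ℕ := (pow_finite_co_support hu γ).toFinset with hSdef
  have hS : ∀ n : ℕ, (u ^ n).coeff γ ≠ 0 → n ∈ S := by
    intro n h'
    rw [hSdef, Set.Finite.mem_toFinset]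
    simpa using h'
  set T : Finset (ℕ × ℕ) := S.biUnion (fun n => Finset.HasAntidiagonal.antidiagonal n) with hTdef
  have hterm : ∀ p : ℕ × ℕ, ((SummableFamily.mul (psFam u hu f) (psFam u hu g)) p).coeff γ
      = (PowerSeries.coeff p.1 f * PowerSeries.coeff p.2 g) * (u ^ (p.1 + p.2)).coeff γ := by
    intro p
    have : (SummableFamily.mul (psFam u hu f) (psFam u hu g)) p
        = (psFam u hu f p.1) * (psFam u hu g p.2) := by
      rw [SummableFamily.mul_toFun]
    rw [this, psFam_apply, psFam_apply, ← HahnSeries.C_mul_eq_smul, ← HahnSeries.C_mul_eq_smul,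
      mul_mul_mul_comm, ← map_mul, HahnSeries.C_mul_eq_smul, ← _root_.pow_add, HahnSeries.coeff_smul,
      smul_eq_mul]
  have hL : (∑ᶠ i, ((psFam u hu (f * g)) i).coeff γ)
      = ∑ n ∈ S, (PowerSeries.coeff n (f * g)) * (u ^ n).coeff γ := by
    rw [← finsum_eq_finset_sum_of_support_subset]
    · refine finsum_congr fun n => ?_
      rw [psFam_apply, HahnSeries.coeff_smul, smul_eq_mul]
    · intro n hn
      rw [Function.mem_support] at hn
      refine hS n fun h0 => hn ?_
      rw [h0, mul_zero]
  have hR : (∑ᶠ p : ℕ × ℕ, ((SummableFamily.mul (psFam u hu f) (psFam u hu g)) p).coeff γ)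
      = ∑ p ∈ T, (PowerSeries.coeff p.1 f * PowerSeries.coeff p.2 g)
          * (u ^ (p.1 + p.2)).coeff γ := by
    rw [← finsum_eq_finset_sum_of_support_subset]
    · exact finsum_congr hterm
    · intro p hp
      rw [Function.mem_support] at hp
      have h1 : (u ^ (p.1 + p.2)).coeff γ ≠ 0 := fun h0 => hp (by rw [h0, mul_zero])
      rw [hTdef]
      simp only [Finset.coe_biUnion, Set.mem_iUnion, Finset.mem_coe, Finset.HasAntidiagonal.mem_antidiagonal]
      exact ⟨p.1 + p.2, hS _ h1, rfl⟩
  rw [hL, hR, Finset.sum_biUnion]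
  · refine Finset.sum_congr rfl fun n _ => ?_
    rw [PowerSeries.coeff_mul, Finset.sum_mul]
    refine Finset.sum_congr rfl fun p hp => ?_
    rw [Finset.HasAntidiagonal.mem_antidiagonal] at hp
    rw [hp]
  · intro x _ y _ hxy
    rw [Function.onFun, Finset.disjoint_left]
    intro p hpx hpy
    rw [Finset.HasAntidiagonal.mem_antidiagonal] at hpx hpy
    exact hxy (hpx ▸ hpy)

/-- Evaluation of power series at a Hahn series of positive order, as a ring hom. -/
noncomputable def psHeval (u : HahnSeries Γ k) (hu : 0 < u.orderTop) :
    PowerSeries k →+* HahnSeries Γ k where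
  toFun f := (psFam u hu f).hsum
  map_one' := by
    ext γ
    rw [coeff_hsum, finsum_eq_single _ 0 (fun n hn => by
      simp [PowerSeries.coeff_one, hn])]
    simp
  map_mul' f g := psFam_hsum_mul u hu f g
  map_zero' := by
    show (psFam u hu 0).hsum = 0
    ext γ
    rw [coeff_hsum]
    simp
  map_add' f g := by
    show (psFam u hu (f + g)).hsum = (psFam u hu f).hsum + (psFam u hu g).hsum
    have h : psFam u hu (f + g) = psFam u hu f + psFam u hu g :=
      SummableFamily.ext fun n => by simp [add_smul]
    rw [h, hsum_add]

lemma psHeval_X (u : HahnSeries Γ k) (hu : 0 < u.orderTop) :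
    psHeval u hu PowerSeries.X = u := by
  have : psHeval u hu PowerSeries.X = (psFam u hu PowerSeries.X).hsum := rfl
  rw [this]
  ext γ
  rw [coeff_hsum, finsum_eq_single _ 1 (fun n hn => by
    simp [PowerSeries.coeff_X, hn])]
  simp

end Heval

/-- Property (5) of Assumption (⊗) (Lemma 4.1, adapting Ziegler's Lemma 3): if `q` is a
prime with `(q : k) ≠ 0`, then every nonzero Hahn series over `k` is the product of a
nonzero element of the subfield `k(Γ)` (generated by the constants and the monomials) and
a `q`-th power. -/
theorem hahnSeries_qth_power_decomposition (Γ : Type*) [AddCommGroup Γ] [LinearOrder Γ] [IsOrderedAddMonoid Γ]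
    (k : Type*) [Field k] (q : ℕ) (hq : q.Prime) (hk : (q : k) ≠ 0) :
    ∀ a : HahnSeries Γ k, a ≠ 0 →
      ∃ b ∈ Subfield.closure
          (Set.range (HahnSeries.C : k →+* HahnSeries Γ k) ∪
            Set.range fun γ : Γ => (HahnSeries.single γ 1 : HahnSeries Γ k)),
        b ≠ 0 ∧ ∃ c : HahnSeries Γ k, a = b * c ^ q := by
  intro a ha
  have hr : a.leadingCoeff ≠ 0 := HahnSeries.leadingCoeff_ne_zero.mpr ha
  set r := a.leadingCoeff with hrdef
  have hru : r⁻¹ * a.leadingCoeff = 1 := inv_mul_cancel₀ hr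
  set y : HahnSeries Γ k := HahnSeries.single (-a.order) r⁻¹ * a with hy
  have hupos : 0 < (y - 1).orderTop := by
    rw [← HahnSeries.orderTop_neg, neg_sub]
    exact HahnSeries.unit_aux a hru (-a.order) (neg_add_cancel _)
  have hgq : (rootPS k q) ^ q = 1 + PowerSeries.X := rootPS_pow_eq hq.two_le hk
  set c : HahnSeries Γ k := psHeval (y - 1) hupos (rootPS k q) with hc
  have hcq : c ^ q = y := by
    rw [hc, ← map_pow, hgq, map_add, map_one, psHeval_X]
    ring
  refine ⟨HahnSeries.single a.order 1 * HahnSeries.C r, ?_, ?_, c, ?_⟩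
  · exact Subfield.mul_mem _
      (Subfield.subset_closure (Or.inr ⟨a.order, rfl⟩))
      (Subfield.subset_closure (Or.inl ⟨r, rfl⟩))
  · exact mul_ne_zero (HahnSeries.single_ne_zero one_ne_zero) (HahnSeries.C_ne_zero hr)
  · rw [hcq, hy, HahnSeries.C_apply, HahnSeries.single_mul_single, ← mul_assoc,
      HahnSeries.single_mul_single]
    rw [show a.order + (0 : Γ) + -a.order = (0 : Γ) by abel,
      show (1 : k) * r * r⁻¹ = 1 by field_simp, HahnSeries.single_zero_one, one_mul]
end

section
/- Let Γ be a linearly ordered additive abelian group, k a field, and q a prime number with (q : k) ≠ 0. Let v := HahnSeries.addVal denote the canonical additive valuation on HahnSeries Γ k with values in WithTop Γ (so v(x) is the order of x for x ≠ 0). Then for every nonzero c ∈ HahnSeries Γ k, the following are equivalent: (i) c is a q-th power in HahnSeries Γ k, i.e., there exists e with e^q = c; (ii) there exists d ∈ HahnSeries Γ k with v(c − d^q) > v(c). -/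
open PowerSeries HahnSeries HahnSeries.SummableFamily

noncomputable section

variable {Γ : Type*} [AddCommGroup Γ] [LinearOrder Γ] [IsOrderedAddMonoid Γ] {k : Type*} [Field k]

instance powerSeries_isAdicComplete :
    IsAdicComplete (Ideal.span {(X : PowerSeries k)}) (PowerSeries k) where
  haus' x hx := by
    simp only [← Ideal.one_eq_top, smul_eq_mul, mul_one, SModEq.sub_mem, sub_zero,
      Ideal.span_singleton_pow, Ideal.mem_span_singleton] at hx
    ext n
    have := hx (n + 1)
    rw [X_pow_dvd_iff] at this
    simpa using this n (Nat.lt_succ_self n)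
  prec' f hf := by
    simp only [← Ideal.one_eq_top, smul_eq_mul, mul_one, SModEq.sub_mem,
      Ideal.span_singleton_pow, Ideal.mem_span_singleton, X_pow_dvd_iff] at hf ⊢
    refine ⟨PowerSeries.mk fun n => coeff n (f (n + 1)), fun n i hi => ?_⟩
    rw [map_sub, coeff_mk, sub_eq_zero]
    rcases le_or_gt (i + 1) n with h | h
    · have := hf h i (Nat.lt_succ_self i)
      rw [map_sub, sub_eq_zero] at this
      exact this.symm
    · obtain rfl : n = i + 1 := le_antisymm h.le hi
      rfl

theorem exists_pow_eq_one_add_X (q : ℕ) (hq : q ≠ 0) (hk : (q : k) ≠ 0) :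
    ∃ a : PowerSeries k, a ^ q = 1 + X := by
  have : HenselianRing (PowerSeries k) (Ideal.span {(X : PowerSeries k)}) := inferInstance
  obtain ⟨a, ha, -⟩ := this.is_henselian
    (Polynomial.X ^ q - Polynomial.C (1 + X)) (Polynomial.monic_X_pow_sub_C _ hq) 1
    (by simp [Ideal.mem_span_singleton])
    (by
      simp only [Polynomial.derivative_sub, Polynomial.derivative_C, Polynomial.derivative_X_pow,
        sub_zero, Polynomial.eval_mul, Polynomial.eval_pow, Polynomial.eval_X, one_pow, mul_one,
        Polynomial.eval_natCast]
      refine IsUnit.map _ ?_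
      rw [PowerSeries.isUnit_iff_constantCoeff]
      simpa using hk)
  refine ⟨a, ?_⟩
  simpa [Polynomial.IsRoot, sub_eq_zero] using ha


variable (x : HahnSeries Γ k) (hx : 0 < x.orderTop)

/-- The family `n ↦ (coeff n f) • x ^ n`, summable when `0 < x.orderTop`. -/
def pfam (f : PowerSeries k) : SummableFamily Γ k ℕ where
  toFun n := (coeff n f) • x ^ n
  isPWO_iUnion_support' := by
    refine (isPWO_iUnion_support_powers (zero_le_orderTop_iff.mp hx.le)).mono (Set.iUnion_mono fun n => ?_)
    intro g hg
    simp only [HahnSeries.mem_support, HahnSeries.coeff_smul] at hg ⊢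
    exact right_ne_zero_of_smul hg
  finite_co_support' g := by
    refine ((powers x).finite_co_support' g).subset fun n hn => ?_
    simp only [Set.mem_setOf_eq, HahnSeries.coeff_smul] at hn ⊢
    simpa [show (powers x).toFun n = x ^ n from powers_of_orderTop_pos hx n] using right_ne_zero_of_smul hn

@[simp] lemma pfam_apply (f : PowerSeries k) (n : ℕ) :
    pfam x hx f n = (coeff n f) • x ^ n := rfl

/-- Evaluation of a power series at `x`. -/
def peval (f : PowerSeries k) : HahnSeries Γ k := (pfam x hx f).hsum

lemma peval_add (f g : PowerSeries k) :
    peval x hx (f + g) = peval x hx f + peval x hx g := by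
  rw [peval, peval, peval, ← hsum_add]
  congr 1
  ext n
  simp [add_smul]

lemma peval_one : peval x hx 1 = 1 := by
  have : pfam x hx 1 = SummableFamily.ofFinsupp (Finsupp.single 0 1) := by
    ext n
    cases n with
    | zero => simp
    | succ m => simp [PowerSeries.coeff_one, Finsupp.single_apply]
  rw [peval, this, hsum_ofFinsupp, Finsupp.sum_single_index rfl]
  rfl

lemma peval_X : peval x hx X = x := by
  have : pfam x hx X = SummableFamily.ofFinsupp (Finsupp.single 1 x) := by
    ext n
    rcases eq_or_ne n 1 with rfl | hn
    · simp
    · simp [coeff_X, hn, Finsupp.single_apply, Ne.symm hn]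
  rw [peval, this, hsum_ofFinsupp, Finsupp.sum_single_index rfl]
  rfl

lemma peval_mul (f g : PowerSeries k) :
    peval x hx (f * g) = peval x hx f * peval x hx g := by
  classical
  have key : (SummableFamily.smul (pfam x hx f) (pfam x hx g)).hsum = (pfam x hx (f * g)).hsum := by
    ext g₀
    rw [coeff_hsum, coeff_hsum]
    -- the finite set of powers contributing at g₀
    set T : Finset ℕ := ((powers x).finite_co_support' g₀).toFinset with hT
    set N : ℕ := (T.sup id) + 1 with hN
    have hTN : ∀ n, (x ^ n).coeff g₀ ≠ 0 → n < N := by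
      intro n hn
      have : n ∈ T := by simpa [hT, show (powers x).toFun n = x ^ n from powers_of_orderTop_pos hx n] using hn
      exact Nat.lt_succ_of_le (Finset.le_sup (f := id) this)
    have hFS : ∀ p : ℕ × ℕ, (SummableFamily.smul (pfam x hx f) (pfam x hx g)) p =
        (coeff p.1 f * coeff p.2 g) • x ^ (p.1 + p.2) := by
      intro p
      show (HahnModule.of k).symm
        ((pfam x hx f p.1) • (HahnModule.of k) (pfam x hx g p.2)) = _
      rw [HahnSeries.of_symm_smul_of_eq_mul]
      simp only [pfam_apply]
      rw [smul_mul_smul_comm, _root_.pow_add]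
    have h1 : ∑ᶠ p : ℕ × ℕ, ((SummableFamily.smul (pfam x hx f) (pfam x hx g)) p).coeff g₀ =
        ∑ p ∈ Finset.range N ×ˢ Finset.range N,
          (coeff p.1 f * coeff p.2 g) * (x ^ (p.1 + p.2)).coeff g₀ := by
      rw [finsum_eq_finset_sum_of_support_subset]
      · exact Finset.sum_congr rfl fun p _ => by rw [hFS, HahnSeries.coeff_smul, smul_eq_mul]
      · intro p hp
        simp only [Function.mem_support, hFS, HahnSeries.coeff_smul, smul_eq_mul, ne_eq] at hp
        have := hTN _ (right_ne_zero_of_mul hp)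
        simp only [Finset.coe_product, Set.mem_prod, Finset.mem_coe, Finset.mem_range]
        omega
    have h2 : ∑ᶠ n : ℕ, ((pfam x hx (f * g)) n).coeff g₀ =
        ∑ n ∈ Finset.range N,
          (∑ p ∈ Finset.HasAntidiagonal.antidiagonal n, coeff p.1 f * coeff p.2 g) * (x ^ n).coeff g₀ := by
      rw [finsum_eq_finset_sum_of_support_subset]
      · exact Finset.sum_congr rfl fun n _ => by
          rw [pfam_apply, HahnSeries.coeff_smul, smul_eq_mul, PowerSeries.coeff_mul]
      · intro n hn
        simp only [Function.mem_support, pfam_apply, HahnSeries.coeff_smul, smul_eq_mul,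
          ne_eq] at hn
        simpa using hTN _ (right_ne_zero_of_mul hn)
    rw [h1, h2]
    have h3 : ∑ n ∈ Finset.range N,
        (∑ p ∈ Finset.HasAntidiagonal.antidiagonal n, coeff p.1 f * coeff p.2 g) * (x ^ n).coeff g₀ =
        ∑ n ∈ Finset.range N, ∑ p ∈ Finset.HasAntidiagonal.antidiagonal n,
          coeff p.1 f * coeff p.2 g * (x ^ (p.1 + p.2)).coeff g₀ := by
      refine Finset.sum_congr rfl fun n hn => ?_
      rw [Finset.sum_mul]
      refine Finset.sum_congr rfl fun p hp => ?_
      rw [Finset.HasAntidiagonal.mem_antidiagonal] at hp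
      rw [hp]
    have hdisj : (Finset.range N : Set ℕ).Pairwise
        (Function.onFun Disjoint fun n => Finset.HasAntidiagonal.antidiagonal n) := by
      intro m _ n _ hmn
      simp only [Function.onFun, Finset.disjoint_left]
      intro p hp hp'
      rw [Finset.HasAntidiagonal.mem_antidiagonal] at hp hp'
      exact hmn (hp ▸ hp')
    rw [h3, ← Finset.sum_biUnion hdisj]
    refine (Finset.sum_subset ?_ ?_).symm
    · intro p hp
      simp only [Finset.mem_biUnion, Finset.mem_range, Finset.HasAntidiagonal.mem_antidiagonal] at hp
      obtain ⟨n, hn, rfl⟩ := hp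
      simp only [Finset.mem_product, Finset.mem_range]
      omega
    · intro p hp hp'
      simp only [Finset.mem_biUnion, Finset.mem_range, Finset.HasAntidiagonal.mem_antidiagonal,
        not_exists, not_and] at hp'
      have hge : ¬ p.1 + p.2 < N := fun h => hp' (p.1 + p.2) h rfl
      have h0 : (x ^ (p.1 + p.2)).coeff g₀ = 0 := by
        by_contra h
        exact hge (hTN _ h)
      rw [h0, mul_zero]
  rw [peval, peval, peval, ← key, smul_hsum, HahnSeries.of_symm_smul_of_eq_mul]


lemma peval_pow (f : PowerSeries k) (n : ℕ) :
    peval x hx (f ^ n) = (peval x hx f) ^ n := by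
  induction n with
  | zero => simpa using peval_one x hx
  | succ m ih => rw [pow_succ, pow_succ, peval_mul, ih]

end

/-- The key equivalence in the proof of Lemma 4.7, for the full Hahn series field: for a
prime `q` with `(q : k) ≠ 0` and a nonzero Hahn series `c`, `c` is a `q`-th power if and
only if there is `d` with `v(c - d^q) > v(c)`, where `v` is the canonical additive
valuation on `HahnSeries Γ k`. -/
theorem hahnSeries_qth_power_iff (Γ : Type*) [AddCommGroup Γ] [LinearOrder Γ] [IsOrderedAddMonoid Γ]
    (k : Type*) [Field k] (q : ℕ) (hq : q.Prime) (hk : (q : k) ≠ 0)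
    (c : HahnSeries Γ k) (hc : c ≠ 0) :
    (∃ e : HahnSeries Γ k, e ^ q = c) ↔
      ∃ d : HahnSeries Γ k,
        HahnSeries.addVal Γ k c < HahnSeries.addVal Γ k (c - d ^ q) := by
  constructor
  · rintro ⟨e, rfl⟩
    refine ⟨e, ?_⟩
    rw [sub_self]
    simp only [HahnSeries.addVal_apply, HahnSeries.orderTop_zero]
    exact lt_top_iff_ne_top.mpr (HahnSeries.orderTop_ne_top.mpr hc)
  · rintro ⟨d, hd⟩
    by_cases hcd : c - d ^ q = 0
    · exact ⟨d, (sub_eq_zero.mp hcd).symm⟩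
    have hd0 : d ≠ 0 := by
      rintro rfl
      rw [zero_pow hq.ne_zero, sub_zero] at hd
      exact lt_irrefl _ hd
    have hdq : d ^ q ≠ 0 := pow_ne_zero _ hd0
    set w := c - d ^ q with hw
    have hvc : c.orderTop < w.orderTop := by
      simpa only [HahnSeries.addVal_apply] using hd
    have hdqc : (d ^ q).orderTop = c.orderTop := by
      have hrepr : d ^ q = c + -w := by rw [hw]; ring
      rw [hrepr, HahnSeries.orderTop_add_eq_left (by rwa [HahnSeries.orderTop_neg])]
    set ε := w * (d ^ q)⁻¹ with hε
    have hεne : ε ≠ 0 := mul_ne_zero hcd (inv_ne_zero hdq)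
    have hmul : d ^ q * ε = w := by
      rw [hε, mul_comm w, ← mul_assoc, mul_inv_cancel₀ hdq, one_mul]
    have hords : w.order = (d ^ q).order + ε.order := by
      rw [← hmul]; exact HahnSeries.order_mul_of_ne_zero
          (mul_ne_zero (HahnSeries.leadingCoeff_ne_zero.mpr hdq) (HahnSeries.leadingCoeff_ne_zero.mpr hεne))
    have hcw : c.order < w.order := by
      rw [← WithTop.coe_lt_coe, HahnSeries.order_eq_orderTop_of_ne_zero hc,
        HahnSeries.order_eq_orderTop_of_ne_zero hcd]
      exact hvc
    have hcdq : (d ^ q).order = c.order := by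
      rw [← WithTop.coe_eq_coe, HahnSeries.order_eq_orderTop_of_ne_zero hdq,
        HahnSeries.order_eq_orderTop_of_ne_zero hc]
      exact hdqc
    have hεpos : 0 < ε.orderTop := by
      rw [← HahnSeries.order_eq_orderTop_of_ne_zero hεne, ← WithTop.coe_zero, WithTop.coe_lt_coe]
      rw [hcdq] at hords
      by_contra hle
      push_neg at hle
      exact absurd hords.symm (ne_of_lt (by
        calc c.order + ε.order ≤ c.order + 0 := add_le_add_right hle _
        _ = c.order := add_zero _
        _ < w.order := hcw))
    obtain ⟨a, ha⟩ := exists_pow_eq_one_add_X q hq.ne_zero hk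
    refine ⟨d * peval ε hεpos a, ?_⟩
    rw [mul_pow, ← peval_pow, ha, peval_add, peval_one, peval_X, mul_add, mul_one, hmul, hw]
    ring
end

section
/- Let E be a field, R a subfield of E, and let A and B be valuation subrings of E with associated valuations u and v respectively. Suppose: (i) A ≠ E (u is nontrivial) and every nonzero element of R is a unit of A (u is trivial on R); (ii) B ≠ E (v is nontrivial) and v attains every one of its values on R, i.e., for every nonzero x ∈ E there exists a nonzero r ∈ R with v(r) = v(x). Then A and B are independent: the subring of E generated by A ∪ B is all of E. -/
/-- Lemma 4.3 (in the generality established by its proof): let `E` be a field, `R` a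
subfield, and `A`, `B` valuation subrings of `E` with valuations `u = A.valuation` and
`v = B.valuation`.  If `u` is nontrivial and trivial on `R`, while `v` is nontrivial and
attains all of its values on `R`, then `A` and `B` are independent, i.e. the subring
generated by `A ∪ B` is all of `E`. -/
theorem valuation_subrings_independent (E : Type*) [Field E] (R : Subfield E)
    (A B : ValuationSubring E)
    (hA : (A : Set E) ≠ Set.univ)
    (hAR : ∀ r : E, r ∈ R → r ≠ 0 → A.valuation r = 1)
    (hB : (B : Set E) ≠ Set.univ)
    (hBR : ∀ x : E, x ≠ 0 → ∃ r : E, r ∈ R ∧ r ≠ 0 ∧ B.valuation r = B.valuation x) :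
    Subring.closure ((A : Set E) ∪ (B : Set E)) = ⊤ := by
  rw [eq_top_iff]
  rintro y -
  rcases eq_or_ne y 0 with rfl | hy
  · exact Subring.zero_mem _
  obtain ⟨r, hrR, hr0, hvr⟩ := hBR y hy
  have hrA : r ∈ A := (A.valuation_le_one_iff r).mp (le_of_eq (hAR r hrR hr0))
  have hyB : y * r⁻¹ ∈ B := by
    rw [← B.valuation_le_one_iff, map_mul, map_inv₀, hvr,
      mul_inv_cancel₀ (by simpa using hy)]
  have hyeq : y = y * r⁻¹ * r := by field_simp
  rw [hyeq]
  exact Subring.mul_mem _ (Subring.subset_closure (Or.inr hyB))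
    (Subring.subset_closure (Or.inl hrA))
end

section
/- Let Z be a field, 𝒪 a valuation subring of Z which is henselian as a local ring (HenselianLocalRing), K a subfield of Z, and q a prime number. Assume that for every α ∈ Z that is algebraic over K, either α ∈ K or q divides the degree [K(α) : K] of the intermediate field generated by α over K. Then for every natural number n with 2 ≤ n < q and all elements a₀, a₁, …, a_{n−2} of K lying in the maximal ideal of 𝒪, the polynomial Xⁿ + Xⁿ⁻¹ + a_{n−2}Xⁿ⁻² + ⋯ + a₁X + a₀ has a root in K. -/
open IntermediateField Polynomial

set_option synthInstance.maxHeartbeats 1000000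
set_option maxHeartbeats 4000000

private lemma aux_deg_lt {R : Type*} [CommRing R] [Nontrivial R] (n : ℕ) (h2 : 2 ≤ n)
    (c : Fin (n - 1) → R) :
    (X ^ (n - 1) + ∑ i : Fin (n - 1), C (c i) * X ^ (i : ℕ)).degree < (n : WithBot ℕ) := by
  apply lt_of_le_of_lt (degree_add_le _ _)
  have hb : (⊥ : WithBot ℕ) < (n : WithBot ℕ) := by exact_mod_cast WithBot.bot_lt_coe n
  have h1 : (X ^ (n - 1) : R[X]).degree < (n : WithBot ℕ) := by
    rw [degree_X_pow]; exact_mod_cast Nat.sub_lt (by omega) one_pos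
  have h2' : (∑ i : Fin (n - 1), C (c i) * X ^ (i : ℕ)).degree < (n : WithBot ℕ) := by
    refine lt_of_le_of_lt (degree_sum_le _ _) ((Finset.sup_lt_iff hb).mpr ?_)
    intro i _
    refine lt_of_le_of_lt (degree_mul_le _ _) ?_
    rw [degree_X_pow]
    refine lt_of_le_of_lt (add_le_add degree_C_le le_rfl) ?_
    rw [zero_add]
    exact_mod_cast lt_of_lt_of_le i.2 (Nat.sub_le n 1)
  exact max_lt h1 h2'

private lemma aux_monic {R : Type*} [CommRing R] [Nontrivial R] (n : ℕ) (h2 : 2 ≤ n)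
    (c : Fin (n - 1) → R) :
    (X ^ n + X ^ (n - 1) + ∑ i : Fin (n - 1), C (c i) * X ^ (i : ℕ)).Monic := by
  rw [add_assoc]
  exact monic_X_pow_add (aux_deg_lt n h2 c)

private lemma aux_natDegree {R : Type*} [CommRing R] [Nontrivial R] (n : ℕ) (h2 : 2 ≤ n)
    (c : Fin (n - 1) → R) :
    (X ^ n + X ^ (n - 1) + ∑ i : Fin (n - 1), C (c i) * X ^ (i : ℕ)).natDegree = n := by
  rw [add_assoc]
  apply natDegree_eq_of_degree_eq_some
  rw [degree_add_eq_left_of_degree_lt (by rw [degree_X_pow]; exact aux_deg_lt n h2 c),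
    degree_X_pow]

/-- Verification of the henselianity axioms `φ_l` for the fields `K_q` (from the proofs of
Corollary 4.10, Theorem 5.3 and Theorem 5.8): if `𝒪` is a henselian valuation subring of a
field `Z`, `K` is a subfield of `Z` such that every element of `Z` algebraic over `K`
either lies in `K` or generates an extension of degree divisible by the prime `q`, then
for every `n` with `2 ≤ n < q` and all `a₀, …, a_{n-2} ∈ K` lying in the maximal ideal of
`𝒪`, the polynomial `Xⁿ + Xⁿ⁻¹ + a_{n-2}Xⁿ⁻² + ⋯ + a₀` has a root in `K`. -/
theorem henselian_axioms_of_degree_divisibility (Z : Type*) [Field Z]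
    (𝒪 : ValuationSubring Z) [HenselianLocalRing 𝒪]
    (K : Subfield Z) (q : ℕ) (hq : q.Prime)
    (halg : ∀ α : Z, IsAlgebraic K α →
      α ∈ K ∨ q ∣ Module.finrank K (IntermediateField.adjoin K {α}))
    (n : ℕ) (h2 : 2 ≤ n) (hnq : n < q)
    (a : Fin (n - 1) → Z) (haK : ∀ i, a i ∈ K)
    (ham : ∀ i, ∃ y : 𝒪, (y : Z) = a i ∧ y ∈ IsLocalRing.maximalIdeal 𝒪) :
    ∃ x ∈ K, x ^ n + x ^ (n - 1) + ∑ i : Fin (n - 1), a i * x ^ (i : ℕ) = 0 := by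
  classical
  choose b hb1 hb2 using ham
  set f : Polynomial 𝒪 := X ^ n + X ^ (n - 1) + ∑ i : Fin (n - 1), C (b i) * X ^ (i : ℕ)
    with hf
  have hmon : f.Monic := aux_monic n h2 b
  have heval : f.eval (-1) ∈ IsLocalRing.maximalIdeal 𝒪 := by
    have hev : f.eval (-1) = ∑ i : Fin (n - 1), b i * (-1) ^ (i : ℕ) := by
      simp only [hf, eval_add, eval_pow, eval_X, eval_finset_sum, eval_mul, eval_C]
      have h1 : (-1 : 𝒪) ^ n = -(-1) ^ (n - 1) := by
        conv_lhs => rw [show n = (n - 1) + 1 by omega]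
        rw [pow_succ]; ring
      rw [h1]; ring
    rw [hev]
    exact Ideal.sum_mem _ fun i _ => Ideal.mul_mem_right _ _ (hb2 i)
  have hder : IsUnit (f.derivative.eval (-1)) := by
    have hd : f.derivative.eval (-1) = -((-1 : 𝒪) ^ (n - 2))
        + ∑ i : Fin (n - 1), b i * (i : ℕ) * (-1) ^ ((i : ℕ) - 1) := by
      simp only [hf, derivative_add, derivative_X_pow, derivative_sum, derivative_C_mul,
        eval_add, eval_mul, eval_pow, eval_X, eval_natCast, eval_finset_sum, eval_C]
      have h1 : (-1 : 𝒪) ^ (n - 1) = -(-1) ^ (n - 1 - 1) := by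
        conv_lhs => rw [show n - 1 = (n - 1 - 1) + 1 by omega]
        rw [pow_succ]; ring
      have h2' : ((n - 1 : ℕ) : 𝒪) = (n : 𝒪) - 1 := by
        rw [Nat.cast_sub (by omega), Nat.cast_one]
      have h3 : n - 1 - 1 = n - 2 := by omega
      rw [h1, h2', h3]; ring
    rw [hd]
    by_contra hcon
    have hmem : -((-1 : 𝒪) ^ (n - 2))
        + ∑ i : Fin (n - 1), b i * (i : ℕ) * (-1) ^ ((i : ℕ) - 1)
        ∈ IsLocalRing.maximalIdeal 𝒪 := hcon
    have hmem2 : ∑ i : Fin (n - 1), b i * (i : ℕ) * (-1) ^ ((i : ℕ) - 1)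
        ∈ IsLocalRing.maximalIdeal 𝒪 :=
      Ideal.sum_mem _ fun i _ =>
        Ideal.mul_mem_right _ _ (Ideal.mul_mem_right _ _ (hb2 i))
    have hmem3 : -((-1 : 𝒪) ^ (n - 2)) ∈ IsLocalRing.maximalIdeal 𝒪 := by
      have := Ideal.sub_mem _ hmem hmem2; simpa using this
    exact hmem3 ((isUnit_one.neg.pow _).neg)
  obtain ⟨r, hr, -⟩ := HenselianLocalRing.is_henselian f hmon (-1) heval hder
  have hrZ : (r : Z) ^ n + (r : Z) ^ (n - 1)
      + ∑ i : Fin (n - 1), a i * (r : Z) ^ (i : ℕ) = 0 := by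
    have hev : r ^ n + r ^ (n - 1) + ∑ i : Fin (n - 1), b i * r ^ (i : ℕ) = 0 := by
      have := hr
      simp only [IsRoot, hf, eval_add, eval_pow, eval_X, eval_finset_sum, eval_mul, eval_C]
        at this
      linear_combination this
    have hc := congrArg (Subtype.val) hev
    push_cast at hc
    simpa only [hb1] using hc
  refine ⟨(r : Z), ?_, hrZ⟩
  set x : Z := (r : Z) with hx
  set g : Polynomial K :=
    X ^ n + X ^ (n - 1) + ∑ i : Fin (n - 1), C (⟨a i, haK i⟩ : K) * X ^ (i : ℕ) with hg
  have hmapC : ∀ i : Fin (n - 1), (algebraMap K Z) (⟨a i, haK i⟩ : K) = a i := fun i => rfl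
  have hgx : Polynomial.aeval x g = 0 := by
    simp only [hg, map_add, map_pow, aeval_X, map_sum, map_mul, aeval_C, hmapC]
    exact hrZ
  have hgmon : g.Monic := aux_monic n h2 _
  have hint : IsIntegral K x := ⟨g, hgmon, hgx⟩
  rcases halg x hint.isAlgebraic with h | h
  · exact h
  · exfalso
    have hfr : Module.finrank K (IntermediateField.adjoin K {x}) = (minpoly K x).natDegree :=
      IntermediateField.adjoin.finrank hint
    have hdvd : minpoly K x ∣ g := minpoly.dvd K x hgx
    have hdeg : (minpoly K x).natDegree ≤ n := by
      have hle := Polynomial.natDegree_le_of_dvd hdvd hgmon.ne_zero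
      have hgdeg : g.natDegree = n := aux_natDegree n h2 _
      omega
    have hpos : 0 < (minpoly K x).natDegree := minpoly.natDegree_pos hint
    rw [hfr] at h
    have := Nat.le_of_dvd hpos h
    omega
end
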